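/- Let m ≥ 1, r ∈ ℤ_{≥0}, β ∈ ℂ, λ_i ∈ ℂ* and α_i ∈ ℂ for i = 0,1,…,m. Then the Virasoro module M(V_β,Ω(λ_0,α_0)) ⊗ ⊗_{i=1}^m Ω(λ_i,α_i) is isomorphic to Ω(λ_0,α_0−β) ⊗ ⊗_{i=1}^m Ω(λ_i,α_i) = ⊗_{i=0}^m Ω(λ_i, α_i − δ_{i,0}β): there is a linear bijection commuting with the respective operators L_k for all k ∈ ℤ. -/
import Mathlib


open TensorProduct

/-- Substitution `X_i ↦ X_i - k` (in the variable `i` only) on `ℂ[X_0,…,X_{N-1}]`. -/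
noncomputable def shiftVar {N : ℕ} (i : Fin N) (k : ℂ) :
    MvPolynomial (Fin N) ℂ →ₗ[ℂ] MvPolynomial (Fin N) ℂ :=
  (MvPolynomial.aeval fun j =>
    MvPolynomial.X j - if j = i then MvPolynomial.C k else 0).toLinearMap

/-- The operator `L_k` on `⊗_i Ω(λ_i,α_i) = ℂ[X_0,…,X_{N-1}]`. -/
noncomputable def omegaOp {N : ℕ} (lam al : Fin N → ℂ) (k : ℤ) :
    MvPolynomial (Fin N) ℂ →ₗ[ℂ] MvPolynomial (Fin N) ℂ :=
  ∑ i : Fin N, (lam i ^ k) •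
    ((LinearMap.mulLeft ℂ (MvPolynomial.X i - MvPolynomial.C ((k : ℂ) * al i))).comp
      (shiftVar i (k : ℂ)))

/-- The operator `L_k` on `M(V,Ω(λ_0,α_0)) ⊗ ⊗_{i=1}^m Ω(λ_i,α_i) = V ⊗ ℂ[X_0,…,X_m]`. -/
noncomputable def MOp {V : Type*} [AddCommGroup V] [Module ℂ V]
    (B : ℕ → V →ₗ[ℂ] V) (r : ℕ) {m : ℕ} (lam al : Fin (m + 1) → ℂ) (k : ℤ) :
    V ⊗[ℂ] MvPolynomial (Fin (m + 1)) ℂ →ₗ[ℂ] V ⊗[ℂ] MvPolynomial (Fin (m + 1)) ℂ :=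
  TensorProduct.map LinearMap.id (omegaOp lam al k) +
  ∑ j ∈ Finset.range (r + 1),
    (((k : ℂ) ^ (j + 1)) / ((j + 1).factorial : ℂ)) •
      TensorProduct.map (B j) ((lam 0 ^ k) • shiftVar 0 (k : ℂ))

/-- The operators of the one-dimensional `L̄_r`-module `V_β = ℂ`:
`B_0 = β·id` and `B_i = 0` for `i ≥ 1`. -/
noncomputable def Vbeta (be : ℂ) : ℕ → (ℂ →ₗ[ℂ] ℂ) :=
  fun j => if j = 0 then be • LinearMap.id else 0

/-- **Remark 2.2(1).** Let `m ≥ 1`, `r ∈ ℤ_{≥0}`, `β ∈ ℂ`, `λ_i ∈ ℂ*`, `α_i ∈ ℂ`.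
Then `M(V_β,Ω(λ_0,α_0)) ⊗ ⊗_{i=1}^m Ω(λ_i,α_i) ≅ ⊗_{i=0}^m Ω(λ_i, α_i − δ_{i,0}β)`. -/
theorem statement10 (m r : ℕ) (hm : 1 ≤ m) (be : ℂ)
    (lam al : Fin (m + 1) → ℂ) (hlam : ∀ i, lam i ≠ 0) :
    ∃ φ : (ℂ ⊗[ℂ] MvPolynomial (Fin (m + 1)) ℂ) ≃ₗ[ℂ] MvPolynomial (Fin (m + 1)) ℂ,
      ∀ (k : ℤ) (x : ℂ ⊗[ℂ] MvPolynomial (Fin (m + 1)) ℂ),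
        φ (MOp (Vbeta be) r lam al k x) =
          omegaOp lam (fun i => al i - if i = 0 then be else 0) k (φ x) := by
  refine ⟨TensorProduct.lid ℂ _, fun k x => ?_⟩
  have key : omegaOp lam (fun i => al i - if i = 0 then be else 0) k
      = omegaOp lam al k + (((k : ℂ)) * be * lam 0 ^ k) • shiftVar 0 (k : ℂ) := by
    unfold omegaOp
    have h : ∀ i : Fin (m + 1),
        (lam i ^ k) • ((LinearMap.mulLeft ℂ (MvPolynomial.X i -
            MvPolynomial.C ((k : ℂ) * (al i - if i = 0 then be else 0)))).comp
          (shiftVar i (k : ℂ)))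
        = (lam i ^ k) • ((LinearMap.mulLeft ℂ (MvPolynomial.X i -
            MvPolynomial.C ((k : ℂ) * al i))).comp (shiftVar i (k : ℂ)))
          + (if i = 0 then (((k : ℂ)) * be * lam 0 ^ k) • shiftVar 0 (k : ℂ) else 0) := by
      intro i
      by_cases hi : i = 0
      · subst hi
        refine LinearMap.ext fun p => ?_
        simp only [if_pos rfl, if_true, eq_self_iff_true, LinearMap.add_apply,
          LinearMap.smul_apply, LinearMap.comp_apply, LinearMap.mulLeft_apply,
          MvPolynomial.smul_eq_C_mul, map_mul, map_sub, map_pow]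
        ring
      · simp [hi]
    rw [Finset.sum_congr rfl (fun i _ => h i), Finset.sum_add_distrib,
      Finset.sum_ite_eq' Finset.univ (0 : Fin (m + 1))]
    simp
  rw [key]
  induction x using TensorProduct.induction_on with
  | zero => simp
  | tmul c f =>
      simp only [MOp, Vbeta, LinearMap.add_apply, LinearMap.sum_apply, LinearMap.smul_apply,
        TensorProduct.map_tmul, LinearMap.id_apply]
      rw [Finset.sum_eq_single 0 (by
        intro j _ hj
        simp only [if_neg hj, LinearMap.smul_apply, TensorProduct.map_tmul,
          LinearMap.zero_apply, TensorProduct.zero_tmul, smul_zero])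
        (fun h => absurd (Finset.mem_range.mpr (Nat.succ_pos r)) h)]
      simp only [if_pos rfl, pow_one, Nat.factorial_one, Nat.cast_one, div_one,
        LinearMap.smul_apply, LinearMap.id_apply, map_add, map_smul,
        TensorProduct.lid_tmul, LinearMap.add_apply]
      match_scalars <;> simp [Nat.factorial] <;> ring
  | add y z hy hz =>
      simp only [map_add, LinearMap.add_apply] at *
      rw [hy, hz]
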